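/- Let N = ℝ × S₀ carry a Lorentzian metric of the form ds² = e^{2ψ}(−(dx⁰)² + σ_{ij}dx^i dx^j), let Ω̄ ⊂ N be compact, and suppose every level hypersurface {x⁰ = const} intersecting Ω̄ is strictly convex (its second fundamental form with respect to the past directed normal is positive definite). Then there exists λ > 0 such that χ = e^{λ x⁰} is strictly convex in Ω̄, i.e. its Hessian satisfies χ_{αβ} ≥ c ḡ_{αβ} for some c > 0, where ḡ is the Lorentzian metric. -/

import Mathlib

set_option maxHeartbeats 1000000

private lemma stmt16_quadkey (B D μ lam Q a s : ℝ) (hμpos : 0 < μ)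
    (hD : μ * D = 2 * B ^ 2) (hlamdef : lam = B + D + 1)
    (hQlb : -(B * a ^ 2) - 2 * (B * (|a| * s)) + μ * s ^ 2 ≤ Q) :
    μ / 2 * s ^ 2 ≤ lam * a ^ 2 + Q := by
  have hAM : 2 * (B * (|a| * s)) * μ ≤ 2 * B ^ 2 * a ^ 2 + μ ^ 2 / 2 * s ^ 2 := by
    nlinarith [sq_nonneg (2 * B * |a| - μ * s), sq_abs a]
  have h5 : 2 * (B * (|a| * s)) ≤ D * a ^ 2 + μ / 2 * s ^ 2 := by
    nlinarith [hAM, hD, hμpos]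
  nlinarith [hQlb, h5, sq_nonneg a]


/-- in coordinates, on the compact set Ω̄ =: X: if the covariant
Hessian T = (t_{αβ}) of the time function t is positive definite on spatial
directions (strict convexity of the coordinate slices), then for λ large the
function χ = e^{λt}, whose covariant Hessian is e^{λt}(λ² t_α t_β + λ t_{αβ}) with
t_α = (1,0,…,0), is strictly convex: χ_{αβ} ≥ c ḡ_{αβ} with c > 0, where
ḡ = e^{2ψ}(−(dx⁰)² + σ_{ij}dx^i dx^j). -/
theorem stmt16 (n : ℕ) (X : Type*) [TopologicalSpace X] [CompactSpace X]
    (ψ t : X → ℝ) (hψ : Continuous ψ) (ht : Continuous t)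
    (σ : X → Matrix (Fin n) (Fin n) ℝ) (hσc : Continuous σ)
    (hσ : ∀ p, (σ p).PosDef)
    (T : X → Matrix (Fin (n + 1)) (Fin (n + 1)) ℝ) (hTc : Continuous T)
    (hTsym : ∀ p, (T p).IsSymm)
    (hTspatial : ∀ p, ∀ ξ : Fin n → ℝ, ξ ≠ 0 →
      0 < ∑ i, ∑ j, T p i.succ j.succ * ξ i * ξ j) :
    ∃ lam : ℝ, 0 < lam ∧ ∃ c : ℝ, 0 < c ∧ ∀ p, ∀ η : Fin (n + 1) → ℝ,
      c * (Real.exp (2 * ψ p) *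
          (-(η 0) ^ 2 + ∑ i, ∑ j, σ p i j * η i.succ * η j.succ)) ≤
        Real.exp (lam * t p) *
          (lam ^ 2 * (η 0) ^ 2 + lam * ∑ α, ∑ β, T p α β * η α * η β) := by
  rcases isEmpty_or_nonempty X with hX | hX
  · exact ⟨1, one_pos, 1, one_pos, fun p => (IsEmpty.false p).elim⟩
  -- sum of absolute values of entries of T is bounded by B
  have hFc : Continuous fun p => ∑ α, ∑ β, |T p α β| := by
    refine continuous_finset_sum _ fun α _ => continuous_finset_sum _ fun β _ => ?_
    exact (hTc.matrix_elem α β).abs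
  obtain ⟨pB, -, hpB⟩ := isCompact_univ.exists_isMaxOn Set.univ_nonempty hFc.continuousOn
  set B : ℝ := (∑ α, ∑ β, |T pB α β|) + 1 with hBdef
  have hFnonneg : ∀ p, (0:ℝ) ≤ ∑ α, ∑ β, |T p α β| := fun p =>
    Finset.sum_nonneg fun α _ => Finset.sum_nonneg fun β _ => abs_nonneg _
  have hBpos : 0 < B := by
    have := hFnonneg pB; simp only [hBdef]; linarith
  have hB : ∀ p, (∑ α, ∑ β, |T p α β|) ≤ B := fun p => by
    have h := hpB (Set.mem_univ p)
    simp only [Set.mem_setOf_eq] at h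
    simp only [hBdef]; linarith
  -- spatial positivity bound μ
  obtain ⟨μ, hμpos, hμ⟩ : ∃ μ : ℝ, 0 < μ ∧ ∀ p, ∀ ξ : Fin n → ℝ,
      μ * ‖ξ‖^2 ≤ ∑ i, ∑ j, T p i.succ j.succ * ξ i * ξ j := by
    rcases Nat.eq_zero_or_pos n with hn | hn
    · subst hn
      refine ⟨1, one_pos, fun p ξ => ?_⟩
      have hξ : ‖ξ‖ = 0 := by
        rw [Subsingleton.elim ξ 0]; exact norm_zero
      simp [hξ]
    · haveI : Nonempty (Fin n) := ⟨⟨0, hn⟩⟩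
      set g : X × (Fin n → ℝ) → ℝ :=
        fun q => ∑ i, ∑ j, T q.1 i.succ j.succ * q.2 i * q.2 j with hgdef
      have hgc : Continuous g := by
        refine continuous_finset_sum _ fun i _ => continuous_finset_sum _ fun j _ => ?_
        exact (((hTc.matrix_elem i.succ j.succ).comp continuous_fst).mul
          ((continuous_apply i).comp continuous_snd)).mul
          ((continuous_apply j).comp continuous_snd)
      have hK : IsCompact ((Set.univ : Set X) ×ˢ Metric.sphere (0 : Fin n → ℝ) 1) :=
        isCompact_univ.prod (isCompact_sphere 0 1)
      have hKne : ((Set.univ : Set X) ×ˢ Metric.sphere (0 : Fin n → ℝ) 1).Nonempty := by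
        refine ⟨(Classical.arbitrary X, fun _ => 1), Set.mem_univ _, ?_⟩
        simp [mem_sphere_iff_norm, pi_norm_const]
      obtain ⟨q0, hq0mem, hq0⟩ := hK.exists_isMinOn hKne hgc.continuousOn
      have hq0s : ‖q0.2‖ = 1 := by
        have := hq0mem.2
        simpa [mem_sphere_iff_norm] using this
      have hq0ne : q0.2 ≠ 0 := by
        intro h; rw [h] at hq0s; simp at hq0s
      refine ⟨g q0, hTspatial q0.1 q0.2 hq0ne, fun p ξ => ?_⟩
      rcases eq_or_ne ξ 0 with h0 | h0
      · simp [h0]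
      · have hs : 0 < ‖ξ‖ := norm_pos_iff.mpr h0
        set ξ' : Fin n → ℝ := ‖ξ‖⁻¹ • ξ with hξ'def
        have hξ's : ‖ξ'‖ = 1 := by
          rw [hξ'def, norm_smul, norm_inv, norm_norm, inv_mul_cancel₀ hs.ne']
        have hmem : (p, ξ') ∈ (Set.univ : Set X) ×ˢ Metric.sphere (0 : Fin n → ℝ) 1 :=
          ⟨Set.mem_univ _, by simp [mem_sphere_iff_norm, hξ's]⟩
        have hle : g q0 ≤ g (p, ξ') := hq0 hmem
        have hscale : g (p, ξ') = (‖ξ‖⁻¹)^2 * ∑ i, ∑ j, T p i.succ j.succ * ξ i * ξ j := by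
          simp only [hgdef, hξ'def, Pi.smul_apply, smul_eq_mul]
          rw [Finset.mul_sum]
          refine Finset.sum_congr rfl fun i _ => ?_
          rw [Finset.mul_sum]
          exact Finset.sum_congr rfl fun j _ => by ring
        rw [hscale] at hle
        have h2 : 0 < (‖ξ‖⁻¹)^2 := by positivity
        calc g q0 * ‖ξ‖^2 ≤ ((‖ξ‖⁻¹)^2 * ∑ i, ∑ j, T p i.succ j.succ * ξ i * ξ j) * ‖ξ‖^2 := by
              nlinarith [sq_nonneg ‖ξ‖]
          _ = ∑ i, ∑ j, T p i.succ j.succ * ξ i * ξ j := by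
              field_simp
  -- choose lam
  obtain ⟨D, hD⟩ : ∃ D : ℝ, μ * D = 2 * B^2 := ⟨2 * B^2 / μ, by field_simp⟩
  have hDpos : 0 < D := by nlinarith
  set lam : ℝ := B + D + 1 with hlamdef
  have hlam : 0 < lam := by positivity
  -- bounds on exp factors
  obtain ⟨pm, -, hpm⟩ := isCompact_univ.exists_isMinOn Set.univ_nonempty ht.continuousOn
  set Em : ℝ := Real.exp (lam * t pm) with hEmdef
  have hEmpos : 0 < Em := Real.exp_pos _
  have hEm : ∀ p, Em ≤ Real.exp (lam * t p) := fun p => by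
    have h : t pm ≤ t p := hpm (Set.mem_univ p)
    exact Real.exp_le_exp.mpr (mul_le_mul_of_nonneg_left h hlam.le)
  obtain ⟨pE, -, hpE⟩ := isCompact_univ.exists_isMaxOn Set.univ_nonempty hψ.continuousOn
  set E : ℝ := Real.exp (2 * ψ pE) with hEdef
  have hEpos : 0 < E := Real.exp_pos _
  have hE : ∀ p, Real.exp (2 * ψ p) ≤ E := fun p => by
    have h : ψ p ≤ ψ pE := hpE (Set.mem_univ p)
    exact Real.exp_le_exp.mpr (by linarith)
  -- bound on σ entries
  have hGc : Continuous fun p => ∑ i, ∑ j, |σ p i j| := by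
    refine continuous_finset_sum _ fun i _ => continuous_finset_sum _ fun j _ => ?_
    exact (hσc.matrix_elem i j).abs
  obtain ⟨pS, -, hpS⟩ := isCompact_univ.exists_isMaxOn Set.univ_nonempty hGc.continuousOn
  set S : ℝ := (∑ i, ∑ j, |σ pS i j|) + 1 with hSdef
  have hSpos : 0 < S := by
    have : (0:ℝ) ≤ ∑ i, ∑ j, |σ pS i j| :=
      Finset.sum_nonneg fun i _ => Finset.sum_nonneg fun j _ => abs_nonneg _
    simp only [hSdef]; linarith
  have hS : ∀ p, (∑ i, ∑ j, |σ p i j|) ≤ S := fun p => by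
    have h : (∑ i, ∑ j, |σ p i j|) ≤ ∑ i, ∑ j, |σ pS i j| := hpS (Set.mem_univ p)
    simp only [hSdef]; linarith
  -- choose c
  refine ⟨lam, hlam, Em * lam * (μ / 2) / (E * S), by positivity, fun p η => ?_⟩
  set a : ℝ := η 0 with hadef
  set ξ : Fin n → ℝ := fun i => η i.succ with hξdef
  set s : ℝ := ‖ξ‖ with hsdef
  have hs0 : 0 ≤ s := norm_nonneg _
  have hξi : ∀ i, |ξ i| ≤ s := fun i => by
    simpa [Real.norm_eq_abs] using norm_le_pi_norm ξ i
  -- sub-sum bounds from B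
  have habs0 : ∀ q : X, |T q 0 0| ≤ B := fun q => by
    calc |T q 0 0| ≤ ∑ β, |T q 0 β| :=
          Finset.single_le_sum (f := fun β => |T q 0 β|)
            (fun β _ => abs_nonneg _) (Finset.mem_univ (0 : Fin (n+1)))
      _ ≤ ∑ α, ∑ β, |T q α β| :=
          Finset.single_le_sum (f := fun α => ∑ β, |T q α β|)
            (fun α _ => Finset.sum_nonneg fun β _ => abs_nonneg _) (Finset.mem_univ (0 : Fin (n+1)))
      _ ≤ B := hB q
  have hrow : ∀ q : X, (∑ j : Fin n, |T q 0 j.succ|) ≤ B := fun q => by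
    calc (∑ j : Fin n, |T q 0 j.succ|) ≤ ∑ β, |T q 0 β| := by
          rw [Fin.sum_univ_succ]
          have : (0:ℝ) ≤ |T q 0 0| := abs_nonneg _
          linarith
      _ ≤ ∑ α, ∑ β, |T q α β| :=
          Finset.single_le_sum (f := fun α => ∑ β, |T q α β|)
            (fun α _ => Finset.sum_nonneg fun β _ => abs_nonneg _) (Finset.mem_univ (0 : Fin (n+1)))
      _ ≤ B := hB q
  have hcol : ∀ q : X, (∑ i : Fin n, |T q i.succ 0|) ≤ B := fun q => by
    calc (∑ i : Fin n, |T q i.succ 0|) ≤ ∑ i : Fin n, ∑ β, |T q i.succ β| :=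
          Finset.sum_le_sum fun i _ =>
            Finset.single_le_sum (f := fun β => |T q i.succ β|)
              (fun β _ => abs_nonneg _) (Finset.mem_univ (0 : Fin (n+1)))
      _ ≤ ∑ α, ∑ β, |T q α β| := by
          rw [Fin.sum_univ_succ]
          have : (0:ℝ) ≤ ∑ β, |T q 0 β| :=
            Finset.sum_nonneg fun β _ => abs_nonneg _
          linarith
      _ ≤ B := hB q
  -- decompose Q
  set Q : ℝ := ∑ α, ∑ β, T p α β * η α * η β with hQdef
  have hQsplit : Q = T p 0 0 * a * a + (∑ j, T p 0 j.succ * a * ξ j)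
      + ((∑ i, T p i.succ 0 * ξ i * a) + ∑ i, ∑ j, T p i.succ j.succ * ξ i * ξ j) := by
    rw [hQdef, Fin.sum_univ_succ]
    congr 1
    · rw [Fin.sum_univ_succ]
    · rw [← Finset.sum_add_distrib]
      refine Finset.sum_congr rfl fun i _ => ?_
      rw [Fin.sum_univ_succ]
  -- bound the pieces
  have h1 : -(B * a^2) ≤ T p 0 0 * a * a := by
    nlinarith [habs0 p, neg_abs_le (T p 0 0), sq_nonneg a]
  have h2 : -(B * (|a| * s)) ≤ ∑ j, T p 0 j.succ * a * ξ j := by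
    have habs : |∑ j, T p 0 j.succ * a * ξ j| ≤ B * (|a| * s) := by
      calc |∑ j, T p 0 j.succ * a * ξ j| ≤ ∑ j, |T p 0 j.succ * a * ξ j| :=
            Finset.abs_sum_le_sum_abs _ _
        _ ≤ ∑ j : Fin n, |T p 0 j.succ| * (|a| * s) := by
            refine Finset.sum_le_sum fun j _ => ?_
            rw [abs_mul, abs_mul]
            have h1' := hξi j
            have h2' : (0:ℝ) ≤ |T p 0 j.succ| := abs_nonneg _
            have h3' : (0:ℝ) ≤ |a| := abs_nonneg _
            nlinarith [abs_nonneg (ξ j), mul_nonneg h2' h3']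
        _ = (∑ j : Fin n, |T p 0 j.succ|) * (|a| * s) := by rw [Finset.sum_mul]
        _ ≤ B * (|a| * s) := by
            have := hrow p
            have h4' : (0:ℝ) ≤ |a| * s := mul_nonneg (abs_nonneg _) hs0
            nlinarith
    linarith [neg_abs_le (∑ j, T p 0 j.succ * a * ξ j)]
  have h3 : -(B * (|a| * s)) ≤ ∑ i, T p i.succ 0 * ξ i * a := by
    have habs : |∑ i, T p i.succ 0 * ξ i * a| ≤ B * (|a| * s) := by
      calc |∑ i, T p i.succ 0 * ξ i * a| ≤ ∑ i, |T p i.succ 0 * ξ i * a| :=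
            Finset.abs_sum_le_sum_abs _ _
        _ ≤ ∑ i : Fin n, |T p i.succ 0| * (|a| * s) := by
            refine Finset.sum_le_sum fun i _ => ?_
            rw [abs_mul, abs_mul]
            have h1' := hξi i
            have h2' : (0:ℝ) ≤ |T p i.succ 0| := abs_nonneg _
            have h3' : (0:ℝ) ≤ |a| := abs_nonneg _
            nlinarith [abs_nonneg (ξ i), mul_nonneg h2' h3']
        _ = (∑ i : Fin n, |T p i.succ 0|) * (|a| * s) := by rw [Finset.sum_mul]
        _ ≤ B * (|a| * s) := by
            have := hcol p
            have h4' : (0:ℝ) ≤ |a| * s := mul_nonneg (abs_nonneg _) hs0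
            nlinarith
    linarith [neg_abs_le (∑ i, T p i.succ 0 * ξ i * a)]
  have h4 : μ * s^2 ≤ ∑ i, ∑ j, T p i.succ j.succ * ξ i * ξ j := hμ p ξ
  have hQlb : -(B * a^2) - 2 * (B * (|a| * s)) + μ * s^2 ≤ Q := by
    rw [hQsplit]; linarith
  -- key quadratic inequality
  have hKey : μ / 2 * s^2 ≤ lam * a^2 + Q :=
    stmt16_quadkey B D μ lam Q a s hμpos hD hlamdef hQlb
  -- bound LHS by S s^2
  have hσb : (∑ i, ∑ j, σ p i j * ξ i * ξ j) ≤ S * s^2 := by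
    calc (∑ i, ∑ j, σ p i j * ξ i * ξ j) ≤ |∑ i, ∑ j, σ p i j * ξ i * ξ j| := le_abs_self _
      _ ≤ ∑ i, |∑ j, σ p i j * ξ i * ξ j| := Finset.abs_sum_le_sum_abs _ _
      _ ≤ ∑ i, ∑ j, |σ p i j * ξ i * ξ j| :=
          Finset.sum_le_sum fun i _ => Finset.abs_sum_le_sum_abs _ _
      _ ≤ ∑ i, ∑ j, |σ p i j| * s^2 := by
          refine Finset.sum_le_sum fun i _ => Finset.sum_le_sum fun j _ => ?_
          rw [abs_mul, abs_mul]
          have h1' := hξi i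
          have h2' := hξi j
          have hij : |ξ i| * |ξ j| ≤ s^2 := by
            nlinarith [abs_nonneg (ξ i), abs_nonneg (ξ j)]
          rw [mul_assoc]
          exact mul_le_mul_of_nonneg_left hij (abs_nonneg _)
      _ = (∑ i, ∑ j, |σ p i j|) * s^2 := by
          rw [Finset.sum_mul]
          exact Finset.sum_congr rfl fun i _ => by rw [Finset.sum_mul]
      _ ≤ S * s^2 := mul_le_mul_of_nonneg_right (hS p) (sq_nonneg s)
  -- put everything together
  set c : ℝ := Em * lam * (μ / 2) / (E * S) with hcdef
  have hcpos : 0 < c := by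
    rw [hcdef]
    exact div_pos (mul_pos (mul_pos hEmpos hlam) (by linarith)) (mul_pos hEpos hSpos)
  have hLHS : c * (Real.exp (2 * ψ p) * (-a^2 + ∑ i, ∑ j, σ p i j * ξ i * ξ j))
      ≤ c * (E * (S * s^2)) := by
    have hexp : 0 < Real.exp (2 * ψ p) := Real.exp_pos _
    have hinner : -a^2 + (∑ i, ∑ j, σ p i j * ξ i * ξ j) ≤ S * s^2 := by
      linarith [hσb, sq_nonneg a]
    have step1 : Real.exp (2 * ψ p) * (-a^2 + ∑ i, ∑ j, σ p i j * ξ i * ξ j)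
        ≤ Real.exp (2 * ψ p) * (S * s^2) :=
      mul_le_mul_of_nonneg_left hinner hexp.le
    have step2 : Real.exp (2 * ψ p) * (S * s^2) ≤ E * (S * s^2) := by
      have hSs : (0:ℝ) ≤ S * s^2 := by positivity
      exact mul_le_mul_of_nonneg_right (hE p) hSs
    exact mul_le_mul_of_nonneg_left (step1.trans step2) hcpos.le
  have hRHS : Em * (lam * (μ / 2 * s^2)) ≤ Real.exp (lam * t p) * (lam^2 * a^2 + lam * Q) := by
    have hform : lam^2 * a^2 + lam * Q = lam * (lam * a^2 + Q) := by ring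
    rw [hform]
    have hin : lam * (μ / 2 * s^2) ≤ lam * (lam * a^2 + Q) :=
      mul_le_mul_of_nonneg_left hKey hlam.le
    have hin0 : (0:ℝ) ≤ lam * (μ / 2 * s^2) := by positivity
    calc Em * (lam * (μ / 2 * s^2)) ≤ Real.exp (lam * t p) * (lam * (μ / 2 * s^2)) :=
          mul_le_mul_of_nonneg_right (hEm p) hin0
      _ ≤ Real.exp (lam * t p) * (lam * (lam * a^2 + Q)) :=
          mul_le_mul_of_nonneg_left hin (Real.exp_pos _).le
  have hEq : c * (E * (S * s^2)) = Em * (lam * (μ / 2 * s^2)) := by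
    have hE0 : E ≠ 0 := hEpos.ne'
    have hS0 : S ≠ 0 := hSpos.ne'
    rw [hcdef]
    field_simp
  calc c * (Real.exp (2 * ψ p) * (-(η 0)^2 + ∑ i, ∑ j, σ p i j * η i.succ * η j.succ))
      = c * (Real.exp (2 * ψ p) * (-a^2 + ∑ i, ∑ j, σ p i j * ξ i * ξ j)) := rfl
    _ ≤ c * (E * (S * s^2)) := hLHS
    _ = Em * (lam * (μ / 2 * s^2)) := hEq
    _ ≤ Real.exp (lam * t p) * (lam^2 * a^2 + lam * Q) := hRHS
    _ = Real.exp (lam * t p) * (lam^2 * (η 0)^2 + lam * ∑ α, ∑ β, T p α β * η α * η β) := rfl
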